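/- Let D be a digraph whose underlying undirected graph is 6-choosable. Then D is majority 3-choosable. -/

import Mathlib

open scoped Classical

variable {V : Type*} [Fintype V]

/-- The out-neighborhood of `v` in the digraph on `V` with edge relation `E`. -/
noncomputable def outNbrs (E : V → V → Prop) (v : V) : Finset V :=
  Finset.univ.filter (fun w => E v w)

/-- The in-neighborhood of `v` in the digraph on `V` with edge relation `E`. -/
noncomputable def inNbrs (E : V → V → Prop) (v : V) : Finset V :=
  Finset.univ.filter (fun w => E w v)

/-- `c` is a majority coloring of the digraph `(V, E)`: every vertex `v` has at
most `d⁺(v)/2` out-neighbors `w` with `c w = c v`. -/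
def IsMajorityColoring {α : Type*} (E : V → V → Prop) (c : V → α) : Prop :=
  ∀ v : V, 2 * ((outNbrs E v).filter (fun w => c w = c v)).card ≤ (outNbrs E v).card

/-- `l` is the vertex list of a directed cycle: a nonempty list of pairwise
distinct vertices in which each vertex has an edge to the next one, and the
last vertex has an edge back to the first one. -/
def IsDiCycle (E : V → V → Prop) (l : List V) : Prop :=
  l ≠ [] ∧ l.Nodup ∧ l.Chain' E ∧
    ∃ a b, l.head? = some a ∧ l.getLast? = some b ∧ E b a

/-- All vertices of the list `l` get the same color under `c`. -/
def MonochromaticList {α : Type*} (c : V → α) (l : List V) : Prop :=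
  ∀ u ∈ l, ∀ w ∈ l, c u = c w

/-- The digraph `(V, E)` is majority `k`-choosable: for every assignment of
lists of size at least `k` to the vertices there is a majority coloring
choosing each vertex's color from its list. -/
def MajorityChoosable (E : V → V → Prop) (k : ℕ) : Prop :=
  ∀ L : V → Finset ℕ, (∀ v, k ≤ (L v).card) →
    ∃ c : V → ℕ, (∀ v, c v ∈ L v) ∧ IsMajorityColoring E c

/-- The underlying simple graph of the digraph `(V, E)`:
`x` and `y` are adjacent iff `x ≠ y` and there is an edge between them in some direction. -/
def underGraph (E : V → V → Prop) : SimpleGraph V where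
  Adj u v := u ≠ v ∧ (E u v ∨ E v u)
  symm := ⟨fun _ _ h => ⟨h.1.symm, h.2.symm⟩⟩
  loopless := ⟨fun _ h => h.1 rfl⟩

/-! ### Auxiliary material for the proof -/

private lemma card_filter_split {α : Type*} [DecidableEq α] (s R : Finset α) (p : α → Prop)
    [DecidablePred p] :
    (s.filter p).card = ((s ∩ R).filter p).card + ((s \ R).filter p).card := by
  have h1 : s.filter p = ((s ∩ R).filter p) ∪ ((s \ R).filter p) := by
    rw [← Finset.filter_union]
    congr 1
    ext a
    simp only [Finset.mem_union, Finset.mem_inter, Finset.mem_sdiff]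
    tauto
  rw [h1, Finset.card_union_of_disjoint]
  apply Finset.disjoint_filter_filter
  rw [Finset.disjoint_left]
  intro a ha ha'
  exact (Finset.mem_sdiff.mp ha').2 (Finset.mem_inter.mp ha).2

/-- The key combinatorial induction.  Vertices carry two distinct candidate
values `A v ≠ B v`, such that along each edge the ordered pairs of candidate
values are distinct.  Given integer budgets `σ₁ σ₂` whose sum at each
still-undecided vertex `v` is at least (number of undecided out-neighbours)
minus one plus the number of decided out-neighbours currently conflicting with
either candidate value of `v`, one can extend the partial coloring `c₀` to all
of `R` so that every `v ∈ R` has at most `σ₁ v` (resp. `σ₂ v`) out-neighbours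
of its own color, according to which candidate it chose. -/
private lemma zind (E : V → V → Prop) (hE : ∀ v : V, ¬ E v v)
    (A B : V → ℕ) (hAB : ∀ v, A v ≠ B v)
    (hprop : ∀ u w, E u w → ¬(A u = A w ∧ B u = B w)) :
    ∀ (n : ℕ) (R : Finset V), R.card = n → ∀ (σ₁ σ₂ : V → ℤ) (c₀ : V → ℕ),
      (∀ v ∈ R, ((outNbrs E v ∩ R).card : ℤ) - 1
          + (((outNbrs E v \ R).filter (fun w => c₀ w = A v)).card : ℤ)
          + (((outNbrs E v \ R).filter (fun w => c₀ w = B v)).card : ℤ) ≤ σ₁ v + σ₂ v) →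
      ∃ c : V → ℕ, (∀ u, u ∉ R → c u = c₀ u) ∧ (∀ v ∈ R, c v = A v ∨ c v = B v) ∧
        ∀ v ∈ R, (((outNbrs E v).filter (fun w => c w = c v)).card : ℤ)
            ≤ if c v = A v then σ₁ v else σ₂ v := by
  intro n
  induction n with
  | zero =>
      intro R hR σ₁ σ₂ c₀ _
      have hRe : R = ∅ := Finset.card_eq_zero.mp hR
      subst hRe
      exact ⟨c₀, fun u _ => rfl, fun v hv => absurd hv (Finset.notMem_empty v),
        fun v hv => absurd hv (Finset.notMem_empty v)⟩
  | succ n ih =>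
      intro R hR σ₁ σ₂ c₀ hinv
      by_cases hcase : ∀ v ∈ R,
          ((((outNbrs E v ∩ R).filter (fun w => A w = A v)).card : ℤ)
            + (((outNbrs E v \ R).filter (fun w => c₀ w = A v)).card : ℤ)) ≤ σ₁ v
      · -- Case 1: assign `A` to every remaining vertex.
        refine ⟨fun u => if u ∈ R then A u else c₀ u, ?_, ?_, ?_⟩
        · intro u hu; simp [hu]
        · intro v hv; left; simp [hv]
        · intro v hv
          simp only [if_pos hv]
          rw [if_pos trivial]
          have hsplit := card_filter_split (outNbrs E v) R
            (fun w => (if w ∈ R then A w else c₀ w) = A v)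
          have ea : (outNbrs E v ∩ R).filter (fun w => (if w ∈ R then A w else c₀ w) = A v)
              = (outNbrs E v ∩ R).filter (fun w => A w = A v) := by
            refine Finset.filter_congr ?_
            intro w hw
            have : w ∈ R := (Finset.mem_inter.mp hw).2
            simp [this]
          have eb : (outNbrs E v \ R).filter (fun w => (if w ∈ R then A w else c₀ w) = A v)
              = (outNbrs E v \ R).filter (fun w => c₀ w = A v) := by
            refine Finset.filter_congr ?_
            intro w hw
            have : w ∉ R := (Finset.mem_sdiff.mp hw).2
            simp [this]
          rw [ea, eb] at hsplit
          have := hcase v hv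
          rw [hsplit]
          push_cast
          linarith
      · -- Case 2: some vertex `v` must take value `B v`; it is then safe forever.
        push_neg at hcase
        obtain ⟨v, hv, hlt⟩ := hcase
        set R' : Finset V := R.erase v with hR'def
        have hvR' : v ∉ R' := Finset.notMem_erase v R
        have hR'card : R'.card = n := by
          rw [hR'def, Finset.card_erase_of_mem hv, hR]
          omega
        set c₀' : V → ℕ := Function.update c₀ v (B v) with hc₀'def
        have hc₀'v : c₀' v = B v := Function.update_self v (B v) c₀
        have hc₀'ne : ∀ w, w ≠ v → c₀' w = c₀ w := fun w hw =>
          Function.update_of_ne hw (B v) c₀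
        -- the new invariant
        have hinv' : ∀ u ∈ R', ((outNbrs E u ∩ R').card : ℤ) - 1
            + (((outNbrs E u \ R').filter (fun w => c₀' w = A u)).card : ℤ)
            + (((outNbrs E u \ R').filter (fun w => c₀' w = B u)).card : ℤ)
            ≤ σ₁ u + σ₂ u := by
          intro u hu
          have huR : u ∈ R := Finset.mem_of_mem_erase hu
          have huv : u ≠ v := Finset.ne_of_mem_erase hu
          by_cases hvout : v ∈ outNbrs E u
          · -- `v` is an out-neighbour of `u`
            have e1 : outNbrs E u ∩ R' = (outNbrs E u ∩ R).erase v := by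
              ext x
              simp only [hR'def, Finset.mem_inter, Finset.mem_erase]
              tauto
            have e1card : (outNbrs E u ∩ R').card = (outNbrs E u ∩ R).card - 1 := by
              rw [e1, Finset.card_erase_of_mem (Finset.mem_inter.mpr ⟨hvout, hv⟩)]
            have hvmem : v ∈ outNbrs E u ∩ R := Finset.mem_inter.mpr ⟨hvout, hv⟩
            have hcardpos : 1 ≤ (outNbrs E u ∩ R).card := Finset.card_pos.mpr ⟨v, hvmem⟩
            have e2 : outNbrs E u \ R' = insert v (outNbrs E u \ R) := by
              ext x
              simp only [hR'def, Finset.mem_sdiff, Finset.mem_erase, Finset.mem_insert]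
              constructor
              · rintro ⟨hx, hx2⟩
                by_cases hxv : x = v
                · exact Or.inl hxv
                · exact Or.inr ⟨hx, fun hxR => hx2 ⟨hxv, hxR⟩⟩
              · rintro (rfl | ⟨hx, hx2⟩)
                · exact ⟨hvout, fun h => h.1 rfl⟩
                · exact ⟨hx, fun h => hx2 h.2⟩
            have hvnot : v ∉ outNbrs E u \ R := fun h => (Finset.mem_sdiff.mp h).2 hv
            -- filters over `outNbrs E u \ R` don't see the update at `v`
            have efilt : ∀ (x : ℕ), ((outNbrs E u \ R).filter (fun w => c₀' w = x))
                = ((outNbrs E u \ R).filter (fun w => c₀ w = x)) := by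
              intro x
              apply Finset.filter_congr
              intro w hw
              have hwv : w ≠ v := fun h => hvnot (h ▸ hw)
              rw [hc₀'ne w hwv]
            have e3 : ∀ (x : ℕ), (((outNbrs E u \ R').filter (fun w => c₀' w = x)).card : ℤ)
                = (((outNbrs E u \ R).filter (fun w => c₀ w = x)).card : ℤ)
                  + (if B v = x then 1 else 0) := by
              intro x
              rw [e2, Finset.filter_insert]
              by_cases hBx : B v = x
              · rw [if_pos (by rw [hc₀'v]; exact hBx), if_pos hBx,
                  Finset.card_insert_of_notMem (fun h => hvnot (Finset.mem_of_mem_filter v h)),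
                  efilt]
                push_cast; ring
              · rw [if_neg (by rw [hc₀'v]; exact hBx), if_neg hBx, efilt]
                simp
            have hnotboth : ¬(B v = A u ∧ B v = B u) := by
              rintro ⟨h1, h2⟩
              exact hAB u (h1 ▸ h2 ▸ rfl)
            have hold := hinv u huR
            rw [e1card, e3 (A u), e3 (B u)]
            have hcast : ((outNbrs E u ∩ R).card - 1 : ℕ)
                = ((outNbrs E u ∩ R).card : ℤ) - 1 := by
              push_cast [Nat.cast_sub hcardpos]; ring
            rw [hcast]
            by_cases h1 : B v = A u <;> by_cases h2 : B v = B u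
            · exact absurd ⟨h1, h2⟩ hnotboth
            · simp only [if_pos h1, if_neg h2]; linarith
            · simp only [if_neg h1, if_pos h2]; linarith
            · simp only [if_neg h1, if_neg h2]; linarith
          · -- `v` is not an out-neighbour of `u`: nothing changes
            have e1 : outNbrs E u ∩ R' = outNbrs E u ∩ R := by
              ext x
              simp only [hR'def, Finset.mem_inter, Finset.mem_erase]
              constructor
              · rintro ⟨hx, _, hxR⟩; exact ⟨hx, hxR⟩
              · rintro ⟨hx, hxR⟩
                exact ⟨hx, fun hxv => hvout (hxv ▸ hx), hxR⟩
            have e2 : outNbrs E u \ R' = outNbrs E u \ R := by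
              ext x
              simp only [hR'def, Finset.mem_sdiff, Finset.mem_erase]
              constructor
              · rintro ⟨hx, hx2⟩
                refine ⟨hx, fun hxR => hx2 ⟨?_, hxR⟩⟩
                rintro rfl; exact hvout hx
              · rintro ⟨hx, hx2⟩; exact ⟨hx, fun h => hx2 h.2⟩
            have efilt : ∀ (x : ℕ), ((outNbrs E u \ R').filter (fun w => c₀' w = x))
                = ((outNbrs E u \ R).filter (fun w => c₀ w = x)) := by
              intro x
              rw [e2]
              apply Finset.filter_congr
              intro w hw
              have hwv : w ≠ v := by
                rintro rfl; exact hvout (Finset.mem_sdiff.mp hw).1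
              rw [hc₀'ne w hwv]
            rw [e1, efilt (A u), efilt (B u)]
            exact hinv u huR
        obtain ⟨c, hc1, hc2, hc3⟩ := ih R' hR'card σ₁ σ₂ c₀' hinv'
        have hcv : c v = B v := by rw [hc1 v hvR', hc₀'v]
        refine ⟨c, ?_, ?_, ?_⟩
        · intro u hu
          have huv : u ≠ v := fun h => hu (h ▸ hv)
          have : u ∉ R' := fun h => hu (Finset.mem_of_mem_erase h)
          rw [hc1 u this, hc₀'ne u huv]
        · intro w hw
          by_cases hwv : w = v
          · subst hwv; exact Or.inr hcv
          · exact hc2 w (Finset.mem_erase.mpr ⟨hwv, hw⟩)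
        · intro w hw
          by_cases hwv : w = v
          · subst hwv
            -- the main estimate for the newly decided vertex
            rw [hcv, if_neg (fun h => hAB w h.symm)]
            have hvnotout : w ∉ outNbrs E w := by
              simp [outNbrs, hE w]
            have hsplit := card_filter_split (outNbrs E w) R' (fun x => c x = B w)
            -- part over R'
            have hpart1 : ((outNbrs E w ∩ R').filter (fun x => c x = B w)).card
                ≤ ((outNbrs E w ∩ R).filter (fun x => B w = A x ∨ B w = B x)).card := by
              apply Finset.card_le_card
              intro x hx
              obtain ⟨hx1, hx2⟩ := Finset.mem_filter.mp hx
              obtain ⟨hxout, hxR'⟩ := Finset.mem_inter.mp hx1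
              refine Finset.mem_filter.mpr ⟨Finset.mem_inter.mpr
                ⟨hxout, Finset.mem_of_mem_erase hxR'⟩, ?_⟩
              rcases hc2 x hxR' with h | h
              · exact Or.inl (by rw [← hx2, h])
              · exact Or.inr (by rw [← hx2, h])
            -- part outside R'
            have hout_eq : outNbrs E w \ R' = outNbrs E w \ R := by
              ext x
              simp only [hR'def, Finset.mem_sdiff, Finset.mem_erase]
              constructor
              · rintro ⟨hx, hx2⟩
                refine ⟨hx, fun hxR => hx2 ⟨?_, hxR⟩⟩
                rintro rfl; exact hvnotout hx
              · rintro ⟨hx, hx2⟩; exact ⟨hx, fun h => hx2 h.2⟩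
            have hpart2 : ((outNbrs E w \ R').filter (fun x => c x = B w)).card
                = ((outNbrs E w \ R).filter (fun x => c₀ x = B w)).card := by
              rw [hout_eq]
              congr 1
              refine Finset.filter_congr ?_
              intro x hx
              obtain ⟨hxout, hxR⟩ := Finset.mem_sdiff.mp hx
              have hxv : x ≠ w := by rintro rfl; exact hvnotout hxout
              have hxR'' : x ∉ R' := fun h => hxR (Finset.mem_of_mem_erase h)
              rw [hc1 x hxR'', hc₀'ne x hxv]
            -- disjointness of the two relevant neighbour sets
            have hdisj : Disjoint ((outNbrs E w ∩ R).filter (fun x => A x = A w))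
                ((outNbrs E w ∩ R).filter (fun x => B w = A x ∨ B w = B x)) := by
              rw [Finset.disjoint_left]
              intro x hx1 hx2
              obtain ⟨hx1m, hx1p⟩ := Finset.mem_filter.mp hx1
              obtain ⟨_, hx2p⟩ := Finset.mem_filter.mp hx2
              have hxout : x ∈ outNbrs E w := (Finset.mem_inter.mp hx1m).1
              have hEwx : E w x := by
                have := Finset.mem_filter.mp hxout
                exact this.2
              rcases hx2p with h | h
              · exact hAB w (by rw [h, hx1p])
              · exact hprop w x hEwx ⟨hx1p.symm, h⟩
            have hcard2 : ((outNbrs E w ∩ R).filter (fun x => A x = A w)).card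
                + ((outNbrs E w ∩ R).filter (fun x => B w = A x ∨ B w = B x)).card
                ≤ (outNbrs E w ∩ R).card := by
              rw [← Finset.card_union_of_disjoint hdisj]
              apply Finset.card_le_card
              intro x hx
              rcases Finset.mem_union.mp hx with h | h
              · exact Finset.mem_of_mem_filter x h
              · exact Finset.mem_of_mem_filter x h
            have hold := hinv w hv
            -- assemble
            rw [hsplit]
            push_cast
            rw [hpart2]
            have hp1 : (((outNbrs E w ∩ R').filter (fun x => c x = B w)).card : ℤ)
                ≤ (((outNbrs E w ∩ R).filter (fun x => B w = A x ∨ B w = B x)).card : ℤ) := by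
              exact_mod_cast hpart1
            have hc2' : (((outNbrs E w ∩ R).filter (fun x => A x = A w)).card : ℤ)
                + (((outNbrs E w ∩ R).filter (fun x => B w = A x ∨ B w = B x)).card : ℤ)
                ≤ ((outNbrs E w ∩ R).card : ℤ) := by exact_mod_cast hcard2
            linarith
          · -- previously handled vertices keep their bound
            exact hc3 w (Finset.mem_erase.mpr ⟨hwv, hw⟩)

/-- Every digraph whose underlying undirected graph is
`6`-choosable is majority `3`-choosable. -/
theorem majority_three_choosable_of_underlying_six_choosable
    {V : Type*} [Fintype V] (E : V → V → Prop) (hloopless : ∀ v : V, ¬ E v v)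
    (hchoos : ∀ L : V → Finset ℕ, (∀ v, 6 ≤ (L v).card) →
      ∃ f : V → ℕ, (∀ v, f v ∈ L v) ∧
        ∀ u v : V, (underGraph E).Adj u v → f u ≠ f v) :
    MajorityChoosable E 3 := by
  intro L hL
  -- the ordered-pair lists
  have hPcard : ∀ v, 6 ≤ ((L v).offDiag.image (fun p => Nat.pair p.1 p.2)).card := by
    intro v
    have hinj : Set.InjOn (fun p : ℕ × ℕ => Nat.pair p.1 p.2) ((L v).offDiag : Set (ℕ × ℕ)) := by
      intro p _ q _ h
      obtain ⟨h1, h2⟩ := Nat.pair_eq_pair.mp h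
      exact Prod.ext h1 h2
    rw [Finset.card_image_of_injOn hinj, Finset.offDiag_card]
    have hk : 3 ≤ (L v).card := hL v
    have h1 : 3 * (L v).card ≤ (L v).card * (L v).card :=
      Nat.mul_le_mul_right (L v).card hk
    have h2 : 6 + (L v).card ≤ 3 * (L v).card := by omega
    exact Nat.le_sub_of_add_le (le_trans h2 h1)
  obtain ⟨f, hfP, hfproper⟩ := hchoos _ hPcard
  set A : V → ℕ := fun v => (Nat.unpair (f v)).1 with hA
  set B : V → ℕ := fun v => (Nat.unpair (f v)).2 with hB
  have hmem : ∀ v, A v ∈ L v ∧ B v ∈ L v ∧ A v ≠ B v := by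
    intro v
    obtain ⟨p, hp, hpair⟩ := Finset.mem_image.mp (hfP v)
    obtain ⟨h1, h2, h3⟩ := Finset.mem_offDiag.mp hp
    have hup : Nat.unpair (f v) = p := by rw [← hpair, Nat.unpair_pair]
    constructor
    · rw [hA]; simp only [hup]; exact h1
    · constructor
      · rw [hB]; simp only [hup]; exact h2
      · rw [hA, hB]; simp only [hup]; exact h3
  have hAB : ∀ v, A v ≠ B v := fun v => (hmem v).2.2
  have hpair_eq : ∀ v, Nat.pair (A v) (B v) = f v := fun v => Nat.pair_unpair (f v)
  have hprop : ∀ u w, E u w → ¬(A u = A w ∧ B u = B w) := by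
    rintro u w hEuw ⟨h1, h2⟩
    have hne : u ≠ w := by rintro rfl; exact hloopless u hEuw
    have hfne : f u ≠ f w := hfproper u w ⟨hne, Or.inl hEuw⟩
    apply hfne
    rw [← hpair_eq u, ← hpair_eq w, h1, h2]
  -- apply the key induction with budgets ⌊d⁺/2⌋ on both sides
  have hinv : ∀ v ∈ (Finset.univ : Finset V),
      ((outNbrs E v ∩ Finset.univ).card : ℤ) - 1
      + (((outNbrs E v \ Finset.univ).filter (fun w => (fun _ => 0 : V → ℕ) w = A v)).card : ℤ)
      + (((outNbrs E v \ Finset.univ).filter (fun w => (fun _ => 0 : V → ℕ) w = B v)).card : ℤ)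
      ≤ (fun v => (((outNbrs E v).card / 2 : ℕ) : ℤ)) v
        + (fun v => (((outNbrs E v).card / 2 : ℕ) : ℤ)) v := by
    intro v _
    rw [Finset.inter_univ]
    have hsd : outNbrs E v \ Finset.univ = ∅ := by
      ext x; simp
    rw [hsd]
    simp only [Finset.filter_empty, Finset.card_empty, Nat.cast_zero, add_zero]
    have : ((outNbrs E v).card : ℤ) - 1 ≤ 2 * (((outNbrs E v).card / 2 : ℕ) : ℤ) := by
      push_cast
      omega
    linarith
  obtain ⟨c, _, hc2, hc3⟩ := zind E hloopless A B hAB hprop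
    (Finset.univ : Finset V).card Finset.univ rfl
    (fun v => (((outNbrs E v).card / 2 : ℕ) : ℤ))
    (fun v => (((outNbrs E v).card / 2 : ℕ) : ℤ))
    (fun _ => 0) hinv
  refine ⟨c, ?_, ?_⟩
  · intro v
    rcases hc2 v (Finset.mem_univ v) with h | h
    · rw [h]; exact (hmem v).1
    · rw [h]; exact (hmem v).2.1
  · intro v
    have h := hc3 v (Finset.mem_univ v)
    rw [ite_self] at h
    have hle : ((outNbrs E v).filter (fun w => c w = c v)).card
        ≤ (outNbrs E v).card / 2 := by exact_mod_cast h
    have hgoal : 2 * ((outNbrs E v).filter (fun w => c w = c v)).card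
        ≤ (outNbrs E v).card := by omega
    convert hgoal using 2
    congr!
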